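/- Let C be a left R-module that is Tor-∏-orthogonal, i.e., Tor^R_i((C⁺)^I, C) = 0 for all i ≥ 1 and all sets I. Then Add_R(C) ⊆ PG_CF(R), i.e., every direct summand of a direct sum of copies of C is a projectively coresolved G_C-flat module. Conversely, if Add_R(C) ⊆ PG_CF(R), then C is Tor-∏-orthogonal. -/

import Mathlib

open CategoryTheory CategoryTheory.Limits

set_option autoImplicit false
set_option maxHeartbeats 1000000

universe u

variable {R : Type u} [CommRing R]

/-- A short exact sequence of `R`-modules encoded by two linear maps. -/
def IsSES {A B C : ModuleCat.{u} R} (f : A →ₗ[R] B) (g : B →ₗ[R] C) : Prop :=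
  Function.Injective f ∧ Function.Exact f g ∧ Function.Surjective g

/-- `Add_R(C)`: direct summands of direct sums of copies of `C`. -/
def AddClass (C : ModuleCat.{u} R) : ModuleCat.{u} R → Prop := fun M =>
  ∃ (ι : Type u) (s : M →ₗ[R] (ι →₀ C)) (p : (ι →₀ C) →ₗ[R] M), p ∘ₗ s = LinearMap.id

/-- `Prod_R(C)`: direct summands of direct products of copies of `C`. -/
def ProdClass (C : ModuleCat.{u} R) : ModuleCat.{u} R → Prop := fun M =>
  ∃ (ι : Type u) (s : M →ₗ[R] (ι → C)) (p : (ι → C) →ₗ[R] M), p ∘ₗ s = LinearMap.id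

/-- The character module `C⁺ = Hom_ℤ(C, ℚ/ℤ)` as an `R`-module. -/
noncomputable def charM (C : ModuleCat.{u} R) : ModuleCat.{u} R :=
  ModuleCat.of R (CharacterModule C)

/-- `C` is Tor-∏-orthogonal: `Tor^R_i((C⁺)^I, C) = 0` for all `i ≥ 1` and all sets `I`. -/
def TorProdOrthogonal (C : ModuleCat.{u} R) : Prop :=
  ∀ (I : Type u) (i : ℕ), 1 ≤ i →
    Limits.IsZero (((Tor (ModuleCat.{u} R) i).obj
      (ModuleCat.of R (I → CharacterModule C))).obj C)

/-- A totally acyclic complex `⋯ → P₁ → P₀ → A₀ → A₁ → ⋯` with the `Pᵢ` projective,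
the `Aⱼ` in `Add_R(C)`, which stays exact after `Y ⊗_R -` for `Y ∈ Prod_R(C⁺)`. -/
structure PGCFComplex (C : ModuleCat.{u} R) where
  P : ℕ → ModuleCat.{u} R
  A : ℕ → ModuleCat.{u} R
  projP : ∀ n, Module.Projective R (P n)
  memA : ∀ n, AddClass C (A n)
  dP : ∀ n, P (n + 1) →ₗ[R] P n
  mid : P 0 →ₗ[R] A 0
  dA : ∀ n, A n →ₗ[R] A (n + 1)
  exact_P : ∀ n, Function.Exact (dP (n + 1)) (dP n)
  exact_mid : Function.Exact (dP 0) mid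
  exact_A0 : Function.Exact mid (dA 0)
  exact_A : ∀ n, Function.Exact (dA n) (dA (n + 1))
  tensor_exact : ∀ Y : ModuleCat.{u} R, ProdClass (charM C) Y →
    (∀ n, Function.Exact (LinearMap.lTensor Y (dP (n + 1))) (LinearMap.lTensor Y (dP n))) ∧
    Function.Exact (LinearMap.lTensor Y (dP 0)) (LinearMap.lTensor Y mid) ∧
    Function.Exact (LinearMap.lTensor Y mid) (LinearMap.lTensor Y (dA 0)) ∧
    ∀ n, Function.Exact (LinearMap.lTensor Y (dA n)) (LinearMap.lTensor Y (dA (n + 1)))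

/-- `M` is projectively coresolved `G_C`-flat. -/
def IsPGCF (C M : ModuleCat.{u} R) : Prop :=
  ∃ X : PGCFComplex C, Nonempty (M ≃ₗ[R] ↥(LinearMap.range X.mid))

structure ResData (M : ModuleCat.{u} R) where
  P : ℕ → ModuleCat.{u} R
  projP : ∀ n, Module.Projective R (P n)
  d : ∀ n, P (n + 1) →ₗ[R] P n
  ε : P 0 →ₗ[R] M
  exact_d : ∀ n, Function.Exact (d (n + 1)) (d n)
  exact_ε : Function.Exact (d 0) ε
  surj_ε : Function.Surjective ε

namespace ResData

variable {M : ModuleCat.{u} R} (D : ResData M)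

noncomputable def complex : ChainComplex (ModuleCat.{u} R) ℕ :=
  ChainComplex.of D.P (fun n => ModuleCat.ofHom (D.d n))
    (fun n => ModuleCat.hom_ext (LinearMap.ext fun x => (D.exact_d n).apply_apply_eq_zero x))

@[simp] lemma complex_X (n : ℕ) : D.complex.X n = D.P n := rfl

@[simp] lemma complex_d (n : ℕ) : D.complex.d (n + 1) n = ModuleCat.ofHom (D.d n) :=
  ChainComplex.of_d D.P (fun n => ModuleCat.ofHom (D.d n)) n

instance (n : ℕ) : Projective (D.complex.X n) :=
  (IsProjective.iff_projective (D.P n)).mp (D.projP n)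

noncomputable def π : D.complex ⟶ (ChainComplex.single₀ (ModuleCat.{u} R)).obj M :=
  (ChainComplex.toSingle₀Equiv _ _).symm
    ⟨ModuleCat.ofHom D.ε, by
      show (D.complex.d 1 0) ≫ ModuleCat.ofHom D.ε = 0
      rw [D.complex_d 0]
      exact ModuleCat.hom_ext (LinearMap.ext fun x => D.exact_ε.apply_apply_eq_zero x)⟩

lemma exactAt_succ (n : ℕ) : D.complex.ExactAt (n + 1) := by
  rw [HomologicalComplex.exactAt_iff' _ (n + 2) (n + 1) n (by simp) (by simp)]
  rw [ShortComplex.ShortExact.moduleCat_exact_iff_function_exact]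
  dsimp [HomologicalComplex.sc', HomologicalComplex.shortComplexFunctor']
  rw [D.complex_d, D.complex_d]
  exact D.exact_d n

noncomputable def resolution : ProjectiveResolution M where
  complex := D.complex
  π := D.π
  quasiIso := ⟨fun n => by
    cases n with
    | zero =>
      rw [ChainComplex.quasiIsoAt₀_iff, ShortComplex.quasiIso_iff_of_zeros']
      · constructor
        · rw [ShortComplex.ShortExact.moduleCat_exact_iff_function_exact]
          have : (D.π).f 0 = ModuleCat.ofHom D.ε := rfl
          dsimp [HomologicalComplex.shortComplexFunctor']
          rw [D.complex_d, this]
          exact D.exact_ε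
        · rw [ModuleCat.epi_iff_surjective]
          exact D.surj_ε
      all_goals rfl
    | succ n =>
      rw [quasiIsoAt_iff_exactAt' _ _ (ChainComplex.exactAt_succ_single_obj _ _)]
      exact D.exactAt_succ n⟩

end ResData

section TorIff
open MonoidalCategory

noncomputable def torIso {M : ModuleCat.{u} R} (D : ResData M) (Y : ModuleCat.{u} R) (n : ℕ) :
    ((Tor (ModuleCat.{u} R) n).obj Y).obj M ≅
      (((tensoringLeft (ModuleCat.{u} R)).obj Y).mapHomologicalComplex
        (ComplexShape.down ℕ)).obj D.complex |>.homology n :=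
  D.resolution.isoLeftDerivedObj ((tensoringLeft (ModuleCat.{u} R)).obj Y) n

lemma isZero_tor_iff {M : ModuleCat.{u} R} (D : ResData M) (Y : ModuleCat.{u} R) (i : ℕ) :
    IsZero (((Tor (ModuleCat.{u} R) (i + 1)).obj Y).obj M) ↔
      Function.Exact (LinearMap.lTensor Y (D.d (i + 1))) (LinearMap.lTensor Y (D.d i)) := by
  constructor
  · intro h
    have h2 : IsZero ((((tensoringLeft (ModuleCat.{u} R)).obj Y).mapHomologicalComplex
        (ComplexShape.down ℕ)).obj D.complex |>.homology (i+1)) :=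
      h.of_iso (torIso D Y (i+1)).symm
    rw [← HomologicalComplex.exactAt_iff_isZero_homology] at h2
    rw [HomologicalComplex.exactAt_iff' _ (i + 2) (i + 1) i (by simp) (by simp)] at h2
    rw [ShortComplex.ShortExact.moduleCat_exact_iff_function_exact] at h2
    dsimp [HomologicalComplex.sc', HomologicalComplex.shortComplexFunctor'] at h2
    simp only [Functor.mapHomologicalComplex_obj_d, D.complex_d] at h2
    exact h2
  · intro h
    refine IsZero.of_iso ?_ (torIso D Y (i+1))
    rw [← HomologicalComplex.exactAt_iff_isZero_homology,
      HomologicalComplex.exactAt_iff' _ (i + 2) (i + 1) i (by simp) (by simp),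
      ShortComplex.ShortExact.moduleCat_exact_iff_function_exact]
    dsimp [HomologicalComplex.sc', HomologicalComplex.shortComplexFunctor']
    simp only [Functor.mapHomologicalComplex_obj_d, D.complex_d]
    exact h

end TorIff

section StdRes

noncomputable def aug (N : ModuleCat.{u} R) :
    ModuleCat.of R ((N : Type u) →₀ R) →ₗ[R] N :=
  Finsupp.linearCombination R _root_.id

lemma aug_surj (N : ModuleCat.{u} R) : Function.Surjective (aug N) :=
  fun x => ⟨Finsupp.single x 1, by
    show Finsupp.linearCombination R _root_.id (Finsupp.single x 1) = x
    rw [Finsupp.linearCombination_single, one_smul, _root_.id]⟩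

lemma aug_range (N : ModuleCat.{u} R) : LinearMap.range (aug N) = ⊤ :=
  LinearMap.range_eq_top.2 (aug_surj N)

noncomputable def KK (M : ModuleCat.{u} R) : ℕ → ModuleCat.{u} R
  | 0 => M
  | n + 1 => ModuleCat.of R ↥(LinearMap.ker (aug (KK M n)))

/-- the inclusion of the kernel, as a map from `KK M (n+1)` -/
noncomputable def incl (M : ModuleCat.{u} R) (n : ℕ) :
    KK M (n + 1) →ₗ[R] ModuleCat.of R ((KK M n : Type u) →₀ R) :=
  (LinearMap.ker (aug (KK M n))).subtype

lemma incl_inj (M : ModuleCat.{u} R) (n : ℕ) : Function.Injective (incl M n) :=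
  Submodule.injective_subtype _

lemma incl_range (M : ModuleCat.{u} R) (n : ℕ) :
    LinearMap.range (incl M n) = LinearMap.ker (aug (KK M n)) :=
  Submodule.range_subtype _

noncomputable def stdRes (M : ModuleCat.{u} R) : ResData M where
  P n := ModuleCat.of R ((KK M n : Type u) →₀ R)
  projP n := by exact inferInstanceAs (Module.Projective R ((KK M n : Type u) →₀ R))
  d n := incl M n ∘ₗ aug (KK M (n + 1))
  ε := aug (KK M 0)
  exact_d n := by
    dsimp only
    rw [LinearMap.exact_iff, LinearMap.ker_comp, LinearMap.range_comp,
      LinearMap.ker_eq_bot.2 (incl_inj M n), Submodule.comap_bot, aug_range,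
      Submodule.map_top, incl_range]
  exact_ε := by
    dsimp only
    refine (LinearMap.exact_iff (f := incl M 0 ∘ₗ aug (KK M (0+1))) (g := aug (KK M 0))).mpr ?_
    rw [LinearMap.range_comp, aug_range,
      Submodule.map_top, incl_range]
  surj_ε := aug_surj _

end StdRes

section Helpers

variable {A B K : Type u} [AddCommGroup A] [Module R A] [AddCommGroup B] [Module R B]
  [AddCommGroup K] [Module R K]

/-- A section-of-sorts for a linear map. -/
noncomputable def pick (f : A →ₗ[R] B) (b : B) : A := by
  classical exact if b = 0 then 0 else if h : ∃ a, f a = b then h.choose else 0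

lemma pick_zero (f : A →ₗ[R] B) : pick f 0 = 0 := by classical simp [pick]

lemma pick_spec (f : A →ₗ[R] B) {b : B} (hb : ∃ a, f a = b) : f (pick f b) = b := by
  classical
  by_cases h0 : b = 0
  · subst h0; rw [pick_zero, map_zero]
  · have : pick f b = hb.choose := by
      classical simp only [pick, if_neg h0, dif_pos hb]
    rw [this, hb.choose_spec]

lemma exact_mapRange {J : Type u} {f : A →ₗ[R] B} {g : B →ₗ[R] K}
    (h : Function.Exact f g) :
    Function.Exact (Finsupp.mapRange.linearMap (α := J) f)
      (Finsupp.mapRange.linearMap (α := J) g) := by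
  intro u
  constructor
  · intro h0
    refine ⟨Finsupp.mapRange (pick f) (pick_zero f) u, ?_⟩
    ext i
    simp only [Finsupp.mapRange.linearMap_apply, Finsupp.mapRange_apply]
    refine pick_spec f ?_
    have : g (u i) = 0 := by
      have := congrArg (fun w => w i) h0
      simpa [Finsupp.mapRange_apply] using this
    exact (h (u i)).mp this
  · rintro ⟨v, rfl⟩
    ext i
    simp only [Finsupp.mapRange.linearMap_apply, Finsupp.mapRange_apply]
    exact h.apply_apply_eq_zero (v i)

lemma surj_mapRange {J : Type u} {f : A →ₗ[R] B} (hf : Function.Surjective f) :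
    Function.Surjective (Finsupp.mapRange.linearMap (α := J) f) := by
  intro u
  refine ⟨Finsupp.mapRange (pick f) (pick_zero f) u, ?_⟩
  ext i
  simp only [Finsupp.mapRange.linearMap_apply, Finsupp.mapRange_apply]
  exact pick_spec f (hf (u i))

end Helpers

section FinsuppRes

noncomputable def finsuppRes {C : ModuleCat.{u} R} (J : Type u) (D : ResData C) :
    ResData (ModuleCat.of R (J →₀ C)) where
  P n := ModuleCat.of R (J →₀ D.P n)
  projP n := by
    haveI := D.projP n
    classical
    exact Module.Projective.of_equiv (finsuppLequivDFinsupp (ι := J) (M := D.P n) R).symm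
  d n := Finsupp.mapRange.linearMap (D.d n)
  ε := Finsupp.mapRange.linearMap D.ε
  exact_d n := exact_mapRange (D.exact_d n)
  exact_ε := exact_mapRange D.exact_ε
  surj_ε := surj_mapRange D.surj_ε

end FinsuppRes

section TensorHelpers

variable {Y A B K : Type u} [AddCommGroup Y] [Module R Y] [AddCommGroup A] [Module R A]
  [AddCommGroup B] [Module R B] [AddCommGroup K] [Module R K]

lemma lapply_comp_mapRange {J : Type u} [DecidableEq J] (f : A →ₗ[R] B) (i : J) :
    (Finsupp.lapply (M := B) (R := R) i) ∘ₗ Finsupp.mapRange.linearMap f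
      = f ∘ₗ Finsupp.lapply i := by
  ext x a
  simp [Finsupp.single_apply, apply_ite f]

lemma finsuppRight_lTensor_mapRange {J : Type u} [DecidableEq J] (f : A →ₗ[R] B)
    (t : TensorProduct R Y (J →₀ A)) (i : J) :
    TensorProduct.finsuppRight R R Y B J
        (LinearMap.lTensor Y (Finsupp.mapRange.linearMap f) t) i
      = LinearMap.lTensor Y f (TensorProduct.finsuppRight R R Y A J t i) := by
  rw [TensorProduct.finsuppRight_apply, TensorProduct.finsuppRight_apply,
    ← LinearMap.comp_apply, ← LinearMap.lTensor_comp, lapply_comp_mapRange,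
    LinearMap.lTensor_comp, LinearMap.comp_apply]

lemma exact_lTensor_mapRange {J : Type u} [DecidableEq J] {f : A →ₗ[R] B} {g : B →ₗ[R] K}
    (hgf : g ∘ₗ f = 0)
    (hE : Function.Exact (LinearMap.lTensor Y f) (LinearMap.lTensor Y g)) :
    Function.Exact (LinearMap.lTensor Y (Finsupp.mapRange.linearMap (α := J) f))
      (LinearMap.lTensor Y (Finsupp.mapRange.linearMap (α := J) g)) := by
  intro t
  constructor
  · intro h0
    have hcoord : ∀ i, LinearMap.lTensor Y g (TensorProduct.finsuppRight R R Y B J t i) = 0 := by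
      intro i
      have h := finsuppRight_lTensor_mapRange (Y := Y) g t i
      rw [h0] at h
      simpa using h.symm
    refine ⟨(TensorProduct.finsuppRight R R Y A J).symm
      (Finsupp.mapRange (pick (LinearMap.lTensor Y f)) (pick_zero _)
        (TensorProduct.finsuppRight R R Y B J t)), ?_⟩
    apply (TensorProduct.finsuppRight R R Y B J).injective
    ext i
    rw [finsuppRight_lTensor_mapRange, LinearEquiv.apply_symm_apply, Finsupp.mapRange_apply]
    exact pick_spec _ ((hE _).mp (hcoord i))
  · rintro ⟨x, rfl⟩
    have hcomp : Finsupp.mapRange.linearMap (α := J) g ∘ₗ Finsupp.mapRange.linearMap (α := J) f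
        = 0 := by
      refine LinearMap.ext fun v => Finsupp.ext fun i => ?_
      simp only [LinearMap.comp_apply, Finsupp.mapRange.linearMap_apply,
        Finsupp.mapRange_apply, LinearMap.zero_apply, Finsupp.coe_zero, Pi.zero_apply]
      exact LinearMap.congr_fun hgf (v i)
    rw [← LinearMap.comp_apply, ← LinearMap.lTensor_comp, hcomp, LinearMap.lTensor_zero,
      LinearMap.zero_apply]

lemma exact_lTensor_of_retract {Y' : Type u} [AddCommGroup Y'] [Module R Y']
    (s : Y →ₗ[R] Y') (p : Y' →ₗ[R] Y) (hps : p ∘ₗ s = LinearMap.id)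
    {f : A →ₗ[R] B} {g : B →ₗ[R] K} (hgf : g ∘ₗ f = 0)
    (hE : Function.Exact (LinearMap.lTensor Y' f) (LinearMap.lTensor Y' g)) :
    Function.Exact (LinearMap.lTensor Y f) (LinearMap.lTensor Y g) := by
  intro t
  constructor
  · intro h0
    have h1 : LinearMap.lTensor Y' g (LinearMap.rTensor B s t) = 0 := by
      rw [← LinearMap.comp_apply, LinearMap.lTensor_comp_rTensor,
        ← LinearMap.rTensor_comp_lTensor, LinearMap.comp_apply, h0, map_zero]
    obtain ⟨x, hx⟩ := (hE _).mp h1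
    refine ⟨LinearMap.rTensor A p x, ?_⟩
    have h2 : LinearMap.lTensor Y f (LinearMap.rTensor A p x)
        = LinearMap.rTensor B p (LinearMap.lTensor Y' f x) := by
      rw [← LinearMap.comp_apply, ← LinearMap.comp_apply, LinearMap.lTensor_comp_rTensor,
        LinearMap.rTensor_comp_lTensor]
    rw [h2, hx, ← LinearMap.comp_apply, ← LinearMap.rTensor_comp, hps, LinearMap.rTensor_id,
      LinearMap.id_apply]
  · rintro ⟨x, rfl⟩
    rw [← LinearMap.comp_apply, ← LinearMap.lTensor_comp, hgf, LinearMap.lTensor_zero,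
      LinearMap.zero_apply]

lemma exact_of_subsingleton' (f : A →ₗ[R] B) (g : B →ₗ[R] K) [Subsingleton B] :
    Function.Exact f g := by
  intro y
  have hy : y = 0 := Subsingleton.elim _ _
  subst hy
  constructor
  · intro _
    exact ⟨0, map_zero f⟩
  · intro _
    exact map_zero g

lemma subsingleton_tensor (Y B : Type u) [AddCommGroup Y] [Module R Y] [AddCommGroup B]
    [Module R B] [Subsingleton B] : Subsingleton (TensorProduct R Y B) := by
  constructor
  intro a b
  have : ∀ t : TensorProduct R Y B, t = 0 := by
    intro t
    induction t with
    | zero => rfl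
    | tmul y c =>
      have : c = (0 : B) := Subsingleton.elim _ _
      rw [this, TensorProduct.tmul_zero]
    | add x y hx hy => rw [hx, hy, add_zero]
  rw [this a, this b]

end TensorHelpers

lemma addClass_punit (C : ModuleCat.{u} R) : AddClass C (ModuleCat.of R PUnit) :=
  ⟨PUnit, 0, 0, by ext x⟩

lemma isZero_of_retract {M N : ModuleCat.{u} R} (F : ModuleCat.{u} R ⥤ ModuleCat.{u} R)
    (s : M →ₗ[R] N) (p : N →ₗ[R] M) (hps : p ∘ₗ s = LinearMap.id)
    (h : IsZero (F.obj N)) : IsZero (F.obj M) := by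
  rw [IsZero.iff_id_eq_zero]
  have h1 : (𝟙 M : M ⟶ M) = (show M ⟶ N from ModuleCat.ofHom s) ≫ (show N ⟶ M from ModuleCat.ofHom p) :=
    ModuleCat.hom_ext hps.symm
  rw [← F.map_id, h1, F.map_comp]
  rw [h.eq_zero_of_tgt (F.map (show M ⟶ N from ModuleCat.ofHom s))]
  simp


/-- `C` is Tor-∏-orthogonal if and only if
`Add_R(C) ⊆ PG_CF(R)`. -/
theorem statement8 (C : ModuleCat.{u} R) :
    (TorProdOrthogonal C → ∀ M : ModuleCat.{u} R, AddClass C M → IsPGCF C M) ∧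
    ((∀ M : ModuleCat.{u} R, AddClass C M → IsPGCF C M) → TorProdOrthogonal C) := by
  constructor
  · intro hT M hM
    obtain ⟨J, sM, pM, hpsM⟩ := hM
    classical
    let DM := stdRes M
    have key : ∀ (Y : ModuleCat.{u} R), ProdClass (charM C) Y → ∀ i : ℕ,
        Function.Exact (LinearMap.lTensor Y (DM.d (i + 1))) (LinearMap.lTensor Y (DM.d i)) := by
      intro Y hY i
      obtain ⟨I, s, p, hps⟩ := hY
      let B : ModuleCat.{u} R := ModuleCat.of R (I → CharacterModule C)
      let DC := stdRes C
      have h1 : ∀ k : ℕ, Function.Exact (LinearMap.lTensor B (DC.d (k + 1)))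
          (LinearMap.lTensor B (DC.d k)) := fun k =>
        (isZero_tor_iff DC B k).mp (hT I (k + 1) (Nat.le_add_left 1 k))
      let D1 := finsuppRes J DC
      have hgf : ∀ k : ℕ, DC.d k ∘ₗ DC.d (k + 1) = 0 := fun k =>
        LinearMap.ext fun x => (DC.exact_d k).apply_apply_eq_zero x
      have h2 : ∀ k : ℕ, Function.Exact (LinearMap.lTensor B (D1.d (k + 1)))
          (LinearMap.lTensor B (D1.d k)) := fun k =>
        exact_lTensor_mapRange (hgf k) (h1 k)
      have hgf1 : ∀ k : ℕ, D1.d k ∘ₗ D1.d (k + 1) = 0 := fun k =>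
        LinearMap.ext fun x => (D1.exact_d k).apply_apply_eq_zero x
      have h3 : ∀ k : ℕ, Function.Exact (LinearMap.lTensor Y (D1.d (k + 1)))
          (LinearMap.lTensor Y (D1.d k)) := fun k =>
        exact_lTensor_of_retract s p hps (hgf1 k) (h2 k)
      have h4 : IsZero (((Tor (ModuleCat.{u} R) (i + 1)).obj Y).obj
          (ModuleCat.of R (J →₀ C))) := (isZero_tor_iff D1 Y i).mpr (h3 i)
      have h5 : IsZero (((Tor (ModuleCat.{u} R) (i + 1)).obj Y).obj M) :=
        isZero_of_retract ((Tor (ModuleCat.{u} R) (i + 1)).obj Y) sM pM hpsM h4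
      exact (isZero_tor_iff DM Y i).mp h5
    refine ⟨⟨DM.P, fun n => Nat.rec M (fun _ _ => ModuleCat.of R PUnit) n, DM.projP,
      ?_, DM.d, DM.ε, fun n => 0, DM.exact_d, DM.exact_ε, ?_, ?_, ?_⟩, ⟨?_⟩⟩
    · intro n
      cases n with
      | zero => exact ⟨J, sM, pM, hpsM⟩
      | succ n => exact addClass_punit C
    · exact fun y => ⟨fun _ => DM.surj_ε y, fun _ => rfl⟩
    · intro n
      exact exact_of_subsingleton' _ _
    · intro Y hY
      refine ⟨fun n => key Y hY n, lTensor_exact Y DM.exact_ε DM.surj_ε, ?_, ?_⟩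
      · have hsurj := LinearMap.lTensor_surjective (↑Y) DM.surj_ε
        intro t
        exact ⟨fun _ => hsurj t, fun _ => by
          rw [LinearMap.lTensor_zero, LinearMap.zero_apply]⟩
      · intro n
        haveI : Subsingleton (TensorProduct R (↑Y) PUnit.{u+1}) :=
          subsingleton_tensor _ _
        exact exact_of_subsingleton' _ _
    · exact (LinearEquiv.ofTop (LinearMap.range DM.ε)
        (LinearMap.range_eq_top.2 DM.surj_ε)).symm
  · intro hAdd
    obtain ⟨X, ⟨e⟩⟩ := hAdd C ⟨PUnit, Finsupp.lsingle PUnit.unit, Finsupp.lapply PUnit.unit,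
      by ext x; simp⟩
    intro I i hi
    obtain ⟨k, rfl⟩ : ∃ k, i = k + 1 := ⟨i - 1, by omega⟩
    let DX : ResData (ModuleCat.of R ↥(LinearMap.range X.mid)) :=
      { P := X.P
        projP := X.projP
        d := X.dP
        ε := X.mid.rangeRestrict
        exact_d := X.exact_P
        exact_ε := by
          rw [LinearMap.exact_iff, LinearMap.ker_rangeRestrict, X.exact_mid.linearMap_ker_eq]
        surj_ε := X.mid.surjective_rangeRestrict }
    let B : ModuleCat.{u} R := ModuleCat.of R (I → CharacterModule C)
    have hB : ProdClass (charM C) B := ⟨I, LinearMap.id, LinearMap.id, by ext x; rfl⟩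
    obtain ⟨hP, -, -, -⟩ := X.tensor_exact B hB
    have h4 : IsZero (((Tor (ModuleCat.{u} R) (k + 1)).obj B).obj
        (ModuleCat.of R ↥(LinearMap.range X.mid))) := (isZero_tor_iff DX B k).mpr (hP k)
    exact IsZero.of_iso h4 (((Tor (ModuleCat.{u} R) (k + 1)).obj B).mapIso e.toModuleIso)
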